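/- Let Γ act on L ≅ ℤ^ℓ via ρ, and extend the R(Γ)-valued quasi-polynomial F(q) = χ_{L/qL} to all integers. Then F satisfies the self-duality F(q) = (−1)^ℓ δ_ρ · F(−q) in R(Γ), where δ_ρ(γ) = det R_γ is the reciprocity character and the product is multiplication in the representation ring. -/

import Mathlib

open Polynomial Matrix

section AuxCard

/-- Subtype of small indices is equivalent to `Fin r`. -/
def finLtEquiv (ℓ r : ℕ) (hr : r ≤ ℓ) : {i : Fin ℓ // (i : ℕ) < r} ≃ Fin r where
  toFun i := ⟨i.1.1, i.2⟩
  invFun j := ⟨⟨j.1, lt_of_lt_of_le j.2 hr⟩, j.2⟩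
  left_inv := fun ⟨⟨_, _⟩, _⟩ => rfl
  right_inv := fun ⟨_, _⟩ => rfl

lemma card_lt_subtype (ℓ r : ℕ) (hr : r ≤ ℓ) :
    Fintype.card {i : Fin ℓ // (i : ℕ) < r} = r := by
  rw [Fintype.card_congr (finLtEquiv ℓ r hr), Fintype.card_fin]

lemma card_filter_lt (ℓ r : ℕ) (hr : r ≤ ℓ) :
    (Finset.univ.filter fun i : Fin ℓ => (i : ℕ) < r).card = r := by
  rw [← Fintype.card_subtype, card_lt_subtype ℓ r hr]

lemma card_filter_not_lt (ℓ r : ℕ) (hr : r ≤ ℓ) :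
    (Finset.univ.filter fun i : Fin ℓ => ¬ (i : ℕ) < r).card = ℓ - r := by
  have h := Finset.card_filter_add_card_filter_not
    (s := (Finset.univ : Finset (Fin ℓ))) (p := fun i : Fin ℓ => (i : ℕ) < r)
  rw [card_filter_lt ℓ r hr, Finset.card_univ, Fintype.card_fin] at h
  omega

/-- The number of elements of `ZMod q` killed by multiplication by `d` is `gcd d q`. -/
lemma card_mul_eq_zero (q : ℕ) (hq : 0 < q) (d : ℤ) :
    Nat.card {a : ZMod q // a * (d : ZMod q) = 0} = Int.gcd d q := by
  haveI : NeZero q := ⟨hq.ne'⟩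
  set e : ZMod q := (d : ZMod q) with he
  set φ : ZMod q →+ ZMod q := AddMonoidHom.mulRight e with hφ
  have h1 : Nat.card {a : ZMod q // a * e = 0} = Nat.card φ.ker :=
    Nat.card_congr (Equiv.subtypeEquivRight fun a => by
      simp [hφ, AddMonoidHom.mem_ker])
  have hrange : φ.range = AddSubgroup.zmultiples e := by
    ext x
    simp only [AddMonoidHom.mem_range, AddSubgroup.mem_zmultiples_iff]
    constructor
    · rintro ⟨a, rfl⟩
      refine ⟨(a.val : ℤ), ?_⟩
      rw [zsmul_eq_mul]
      push_cast
      rw [ZMod.natCast_val, ZMod.cast_id]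
      simp [hφ]
    · rintro ⟨k, rfl⟩
      exact ⟨(k : ZMod q), by rw [zsmul_eq_mul]; simp [hφ]⟩
  have hgcd : Int.gcd d (q : ℤ) = Nat.gcd q d.natAbs := by
    rw [Int.gcd, Int.natAbs_natCast, Nat.gcd_comm]
  have horder0 : addOrderOf e = q / Nat.gcd q d.natAbs := by
    rcases Int.natAbs_eq d with hd | hd
    · conv_lhs => rw [he, hd, Int.cast_natCast]
      exact ZMod.addOrderOf_coe _ hq.ne'
    · conv_lhs => rw [he, hd, Int.cast_neg, Int.cast_natCast]
      rw [addOrderOf_neg]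
      exact ZMod.addOrderOf_coe _ hq.ne'
  have horder : addOrderOf e = q / Int.gcd d (q : ℤ) := by rw [hgcd]; exact horder0
  have hdvd : Int.gcd d (q : ℤ) ∣ q := by
    rw [hgcd]; exact Nat.gcd_dvd_left q d.natAbs
  have hgpos : 0 < Int.gcd d (q : ℤ) := by
    rw [hgcd]; exact Nat.gcd_pos_of_pos_left _ hq
  have h2 : Nat.card (ZMod q) = Nat.card (ZMod q ⧸ φ.ker) * Nat.card φ.ker :=
    AddSubgroup.card_eq_card_quotient_mul_card_addSubgroup φ.ker
  have h3 : Nat.card (ZMod q ⧸ φ.ker) = Nat.card φ.range :=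
    Nat.card_congr (QuotientAddGroup.quotientKerEquivRange φ).toEquiv
  have h4 : Nat.card φ.range = q / Int.gcd d (q : ℤ) := by
    rw [hrange, Nat.card_zmultiples, horder]
  have hcardq : Nat.card (ZMod q) = q := by
    rw [Nat.card_eq_fintype_card, ZMod.card]
  rw [h1]
  have hqg : q / Int.gcd d (q : ℤ) * Int.gcd d (q : ℤ) = q := Nat.div_mul_cancel hdvd
  have hqgpos : 0 < q / Int.gcd d (q : ℤ) := Nat.div_pos (Nat.le_of_dvd hq hdvd) hgpos
  have h6 : Nat.card (ZMod q ⧸ φ.ker) = q / Int.gcd d (q : ℤ) := h3.trans h4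
  have h5 : q / Int.gcd d (q : ℤ) * Nat.card φ.ker
      = q / Int.gcd d (q : ℤ) * Int.gcd d (q : ℤ) := by
    calc q / Int.gcd d (q : ℤ) * Nat.card φ.ker
        = Nat.card (ZMod q ⧸ φ.ker) * Nat.card φ.ker := by rw [h6]
      _ = Nat.card (ZMod q) := h2.symm
      _ = q := hcardq
      _ = q / Int.gcd d (q : ℤ) * Int.gcd d (q : ℤ) := hqg.symm
  exact Nat.eq_of_mul_eq_mul_left hqgpos h5

end AuxCard

/-- Number of fixed points of the matrix `M` acting on row vectors of `(ℤ/qℤ)^ℓ`. -/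
noncomputable def fixCard {ℓ : ℕ} (M : Matrix (Fin ℓ) (Fin ℓ) ℤ) (q : ℕ) : ℕ :=
  Nat.card {x : Fin ℓ → ZMod q // Matrix.vecMul x (M.map (Int.cast : ℤ → ZMod q)) = x}

section FixCard

lemma fixCard_eq_prod {ℓ : ℕ} (q : ℕ) (hq : 0 < q) (R S T : Matrix (Fin ℓ) (Fin ℓ) ℤ)
    (hS : IsUnit S.det) (hT : IsUnit T.det) (d : Fin ℓ → ℤ)
    (hSNF : S * (R - 1) * T = Matrix.diagonal d) :
    fixCard R q = ∏ i, Int.gcd (d i) (q : ℤ) := by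
  classical
  haveI : NeZero q := ⟨hq.ne'⟩
  set f : ℤ →+* ZMod q := Int.castRingHom (ZMod q) with hf
  have hcoe : ⇑f = (Int.cast : ℤ → ZMod q) := rfl
  set Sb := S.map f with hSb
  set Tb := T.map f with hTb
  set Ab := (R - 1).map f with hAb
  set w : Fin ℓ → ZMod q := fun i => ((d i : ℤ) : ZMod q) with hw
  have hSu : IsUnit Sb.det := by
    rw [hSb, ← RingHom.mapMatrix_apply, ← RingHom.map_det]; exact hS.map f
  have hTu : IsUnit Tb.det := by
    rw [hTb, ← RingHom.mapMatrix_apply, ← RingHom.map_det]; exact hT.map f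
  have hmap : Sb * Ab * Tb = Matrix.diagonal w := by
    rw [hSb, hAb, hTb, ← Matrix.map_mul, ← Matrix.map_mul, hSNF,
      Matrix.diagonal_map (map_zero f)]
    rfl
  have hA1 : R.map (Int.cast : ℤ → ZMod q) - 1 = Ab := by
    rw [hAb, Matrix.map_sub f (fun a b => by simp), Matrix.map_one f (map_zero f) (_root_.map_one f)]
    rfl
  have e1 : ∀ x : Fin ℓ → ZMod q,
      (Matrix.vecMul x (R.map (Int.cast : ℤ → ZMod q)) = x) ↔ Matrix.vecMul x Ab = 0 := by
    intro x
    rw [← hA1, Matrix.vecMul_sub, Matrix.vecMul_one, sub_eq_zero]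
  have e2 : {x : Fin ℓ → ZMod q // Matrix.vecMul x Ab = 0}
      ≃ {y : Fin ℓ → ZMod q // Matrix.vecMul y (Matrix.diagonal w) = 0} := by
    refine ⟨fun x => ⟨Matrix.vecMul x.1 Sb⁻¹, ?_⟩, fun y => ⟨Matrix.vecMul y.1 Sb, ?_⟩,
      fun x => ?_, fun y => ?_⟩
    · rw [Matrix.vecMul_vecMul, ← hmap, mul_assoc,
        Matrix.nonsing_inv_mul_cancel_left _ _ hSu, ← Matrix.vecMul_vecMul, x.2,
        Matrix.zero_vecMul]
    · have hSA : Sb * Ab = Matrix.diagonal w * Tb⁻¹ := by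
        rw [← hmap, Matrix.mul_nonsing_inv_cancel_right _ _ hTu]
      rw [Matrix.vecMul_vecMul, hSA, ← Matrix.vecMul_vecMul, y.2, Matrix.zero_vecMul]
    · apply Subtype.ext
      simp only
      rw [Matrix.vecMul_vecMul, Matrix.nonsing_inv_mul _ hSu, Matrix.vecMul_one]
    · apply Subtype.ext
      simp only
      rw [Matrix.vecMul_vecMul, Matrix.mul_nonsing_inv _ hSu, Matrix.vecMul_one]
  have e3 : ∀ y : Fin ℓ → ZMod q,
      (Matrix.vecMul y (Matrix.diagonal w) = 0) ↔ ∀ i, y i * w i = 0 := by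
    intro y
    rw [funext_iff]
    refine forall_congr' fun i => ?_
    rw [Matrix.vecMul_diagonal]
    rfl
  have hcard := Nat.card_congr
    (((Equiv.subtypeEquivRight e1).trans e2).trans
      ((Equiv.subtypeEquivRight e3).trans (Equiv.subtypePiEquivPi (p := fun (i : Fin ℓ) (a : ZMod q) => a * w i = 0))))
  rw [fixCard, hcard, Nat.card_pi]
  exact Finset.prod_congr rfl fun i _ => card_mul_eq_zero q hq (d i)

end FixCard

section DetSign

lemma eval_charpoly_eq {n : ℕ} (M : Matrix (Fin n) (Fin n) ℝ) (t : ℝ) :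
    M.charpoly.eval t = (t • (1 : Matrix (Fin n) (Fin n) ℝ) - M).det := by
  rw [Matrix.charpoly, ← Polynomial.coe_evalRingHom, RingHom.map_det]
  congr 1
  ext i j
  by_cases h : i = j
  · subst h
    simp [Matrix.charmatrix_apply_eq, Matrix.one_apply_eq]
  · simp [Matrix.charmatrix_apply_ne _ _ _ h, Matrix.one_apply_ne h]

lemma det_real_eq {ℓ r N : ℕ} (hr : r ≤ ℓ) (hN : 0 < N)
    (R : Matrix (Fin ℓ) (Fin ℓ) ℝ) (hRN : R ^ N = 1)
    (hrank : (R - 1).rank = r) : R.det = (-1 : ℝ) ^ r := by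
  classical
  -- any real root of the characteristic polynomial of `R - 1` is `0` or `-2`
  have hroot : ∀ t : ℝ, (R - 1).charpoly.eval t = 0 → t = 0 ∨ t = -2 := by
    intro t ht
    rw [eval_charpoly_eq] at ht
    obtain ⟨v, hv0, hv⟩ := (Matrix.exists_mulVec_eq_zero_iff).2 ht
    have hRv : R.mulVec v = (1 + t) • v := by
      rw [Matrix.sub_mulVec, Matrix.smul_mulVec, Matrix.one_mulVec,
        Matrix.sub_mulVec, Matrix.one_mulVec, sub_eq_zero] at hv
      have h2 : R.mulVec v = t • v + v := sub_eq_iff_eq_add.mp hv.symm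
      rw [h2, add_smul, one_smul]
      abel
    have hpow : ∀ k : ℕ, (R ^ k).mulVec v = ((1 + t) ^ k) • v := by
      intro k
      induction k with
      | zero => simp
      | succ k ih =>
        rw [pow_succ', ← Matrix.mulVec_mulVec, ih, Matrix.mulVec_smul, hRv, smul_smul,
          ← pow_succ]
    have h2 : ((1 + t) ^ N - 1) • v = 0 := by
      rw [sub_smul, one_smul, ← hpow, hRN, Matrix.one_mulVec, sub_self]
    rcases smul_eq_zero.mp h2 with h | h
    · have h3 : (1 + t) ^ N = 1 := sub_eq_zero.mp h
      rcases (pow_eq_one_iff_of_ne_zero hN.ne').mp h3 with h4 | ⟨h4, _⟩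
      · left; linarith
      · right; linarith
    · exact absurd h hv0
  set p := (R - 1).charpoly with hp
  have hpm : p.Monic := Matrix.charpoly_monic _
  have hpne : p ≠ 0 := hpm.ne_zero
  -- the trailing degree of `p` is `ℓ - r`
  have hfin : p.natTrailingDegree = ℓ - r := by
    set b := Pi.basisFun ℝ (Fin ℓ)
    set A : Module.End ℝ (Fin ℓ → ℝ) := Matrix.toLinAlgEquiv' (R - 1) with hAdef
    set fE : Module.End ℝ (Fin ℓ → ℝ) := Matrix.toLinAlgEquiv' R with hfdef
    have hA : A = Matrix.toLin' (R - 1) := by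
      apply LinearMap.ext
      intro v
      rw [hAdef, Matrix.toLinAlgEquiv'_apply, Matrix.toLin'_apply]
    have hchar : LinearMap.charpoly A = p := by
      rw [hp, ← LinearMap.charpoly_toMatrix A b]
      congr 1
      rw [show (LinearMap.toMatrix b b) A = LinearMap.toMatrix' A from by
        rw [LinearMap.toMatrix_eq_toMatrix'], hA, LinearMap.toMatrix'_toLin']
    have hAf : A = fE - 1 := by
      rw [hAdef, hfdef, map_sub]
      congr 1
      exact _root_.map_one _
    have hfN : fE ^ N = 1 := by
      rw [hfdef, ← map_pow, hRN]
      exact _root_.map_one _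
    have hstep : ∀ v : Fin ℓ → ℝ, A (A v) = 0 → A v = 0 := by
      intro v h2
      set w := A v with hwdef
      have hfw : fE w = w := by
        rw [hAf, LinearMap.sub_apply, Module.End.one_apply, sub_eq_zero] at h2
        exact h2
      have hfv : fE v = v + w := by
        have h3 : w = fE v - v := by
          rw [hwdef, hAf, LinearMap.sub_apply, Module.End.one_apply]
        rw [eq_sub_iff_add_eq] at h3
        rw [← h3]
        abel
      have hkw : ∀ k : ℕ, (fE ^ k) w = w := by
        intro k
        induction k with
        | zero => simp
        | succ k ih => rw [pow_succ, Module.End.mul_apply, hfw, ih]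
      have hk : ∀ k : ℕ, (fE ^ k) v = v + (k : ℝ) • w := by
        intro k
        induction k with
        | zero => simp
        | succ k ih =>
          rw [pow_succ, Module.End.mul_apply, hfv, map_add, ih, hkw k]
          push_cast
          rw [add_smul, one_smul]
          abel
      have hNv := hk N
      rw [hfN, Module.End.one_apply] at hNv
      have hzero : (N : ℝ) • w = 0 := by
        have := hNv.symm
        rwa [add_eq_left] at this
      rcases smul_eq_zero.mp hzero with h | h
      · exact absurd h (Nat.cast_ne_zero.mpr hN.ne')
      · exact h
    have hpowker : ∀ (k : ℕ) (v : Fin ℓ → ℝ), (A ^ k) v = 0 → A v = 0 := by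
      intro k
      induction k with
      | zero =>
        intro v h
        rw [pow_zero, Module.End.one_apply] at h
        rw [h, map_zero]
      | succ k ih =>
        intro v h
        rw [pow_succ, Module.End.mul_apply] at h
        exact hstep v (ih (A v) h)
    have hmax : A.maxGenEigenspace 0 = LinearMap.ker A := by
      ext v
      rw [Module.End.mem_maxGenEigenspace, LinearMap.mem_ker]
      constructor
      · rintro ⟨k, hk⟩
        refine hpowker k v ?_
        simpa using hk
      · intro h
        exact ⟨1, by simpa using h⟩
    have hrk : Module.finrank ℝ (LinearMap.range A) = r := by
      have h5 := Matrix.rank_eq_finrank_range_toLin (R - 1) b b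
      rw [Matrix.toLin_eq_toLin'] at h5
      rw [hA, ← h5, hrank]
    have hkerdim : Module.finrank ℝ (LinearMap.ker A) = ℓ - r := by
      have h6 := LinearMap.finrank_range_add_finrank_ker A
      have h7 : Module.finrank ℝ (Fin ℓ → ℝ) = ℓ := by
        simp [Module.finrank_pi]
      rw [hrk, h7] at h6
      omega
    rw [← hchar, ← LinearMap.finrank_maxGenEigenspace_zero_eq, hmax, hkerdim]
  -- factor out `X ^ (ℓ - r)`
  have hdvd : (X : ℝ[X]) ^ (ℓ - r) ∣ p := by
    rw [Polynomial.X_pow_dvd_iff]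
    intro m hm
    apply Polynomial.coeff_eq_zero_of_lt_natTrailingDegree
    omega
  obtain ⟨g, hg⟩ := hdvd
  have hg0 : g.coeff 0 ≠ 0 := by
    have h8 : p.coeff p.natTrailingDegree ≠ 0 :=
      Polynomial.trailingCoeff_nonzero_iff_nonzero.mpr hpne
    have h9 := Polynomial.coeff_X_pow_mul g (ℓ - r) 0
    rw [zero_add] at h9
    rw [hfin, hg, h9] at h8
    exact h8
  have hgl : g.leadingCoeff = 1 := by
    have h9 := hpm.leadingCoeff
    rw [hg, Polynomial.leadingCoeff_mul, Polynomial.leadingCoeff_X_pow, one_mul] at h9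
    exact h9
  have hgroot : ∀ t : ℝ, -1 ≤ t → g.eval t ≠ 0 := by
    intro t ht h0
    have hpt : p.eval t = 0 := by
      rw [hg, Polynomial.eval_mul, h0, mul_zero]
    rcases hroot t hpt with h1 | h1
    · subst h1
      apply hg0
      rw [Polynomial.coeff_zero_eq_eval_zero]
      exact h0
    · linarith
  have hpos : ∃ t0 : ℝ, -1 ≤ t0 ∧ 0 < g.eval t0 := by
    by_cases hdg : 0 < g.degree
    · have htend := Polynomial.tendsto_atTop_of_leadingCoeff_nonneg g hdg
        (by rw [hgl]; norm_num)
      obtain ⟨t0, ht1, ht2⟩ :=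
        ((htend.eventually_ge_atTop 1).and (Filter.eventually_ge_atTop (-1 : ℝ))).exists
      exact ⟨t0, ht2, by linarith⟩
    · push_neg at hdg
      have hc : g = Polynomial.C (g.coeff 0) := Polynomial.eq_C_of_degree_le_zero hdg
      have h10 := hgl
      rw [hc, Polynomial.leadingCoeff_C] at h10
      refine ⟨0, by norm_num, ?_⟩
      rw [hc, h10]
      simp
  obtain ⟨t0, ht0, hgt0⟩ := hpos
  have hgneg : 0 < g.eval (-1) := by
    rcases lt_trichotomy (g.eval (-1)) 0 with h | h | h
    · exfalso
      have hcont : ContinuousOn (fun x => g.eval x) (Set.Icc (-1) t0) :=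
        (Polynomial.continuous g).continuousOn
      have hmem : (0 : ℝ) ∈ Set.Icc (g.eval (-1)) (g.eval t0) := ⟨h.le, hgt0.le⟩
      obtain ⟨c, hc1, hc2⟩ := intermediate_value_Icc ht0 hcont hmem
      exact hgroot c hc1.1 hc2
    · exact absurd h (hgroot (-1) le_rfl)
    · exact h
  have hdet1 : p.eval (-1) = (-1 : ℝ) ^ ℓ * R.det := by
    rw [hp, eval_charpoly_eq]
    have h11 : (-1 : ℝ) • (1 : Matrix (Fin ℓ) (Fin ℓ) ℝ) - (R - 1) = -R := by
      rw [neg_one_smul]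
      noncomm_ring
    rw [h11, Matrix.det_neg, Fintype.card_fin]
  have hdet2 : p.eval (-1) = (-1 : ℝ) ^ (ℓ - r) * g.eval (-1) := by
    rw [hg, Polynomial.eval_mul, Polynomial.eval_pow, Polynomial.eval_X]
  have h12 : (-1 : ℝ) ^ ℓ * R.det = (-1 : ℝ) ^ (ℓ - r) * g.eval (-1) := by
    rw [← hdet1, hdet2]
  have h14 : (-1 : ℝ) ^ ℓ * (-1 : ℝ) ^ (ℓ - r) = (-1 : ℝ) ^ r := by
    rw [← pow_add, show ℓ + (ℓ - r) = r + 2 * (ℓ - r) by omega, pow_add, pow_mul]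
    norm_num
  have hdpm : R.det = 1 ∨ R.det = -1 := by
    have h11 : R.det ^ N = 1 := by
      rw [← Matrix.det_pow, hRN, Matrix.det_one]
    rcases (pow_eq_one_iff_of_ne_zero hN.ne').mp h11 with h | ⟨h, _⟩
    · exact Or.inl h
    · exact Or.inr h
  have hkey : R.det = (-1 : ℝ) ^ r * g.eval (-1) := by
    calc R.det = ((-1 : ℝ) ^ ℓ * (-1 : ℝ) ^ ℓ) * R.det := by
          rw [← pow_add, ← two_mul, pow_mul]
          norm_num
      _ = (-1 : ℝ) ^ ℓ * ((-1 : ℝ) ^ ℓ * R.det) := by ring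
      _ = (-1 : ℝ) ^ ℓ * ((-1 : ℝ) ^ (ℓ - r) * g.eval (-1)) := by rw [h12]
      _ = ((-1 : ℝ) ^ ℓ * (-1 : ℝ) ^ (ℓ - r)) * g.eval (-1) := by ring
      _ = (-1 : ℝ) ^ r * g.eval (-1) := by rw [h14]
  rcases Nat.even_or_odd r with he | ho
  · rw [he.neg_one_pow] at hkey ⊢
    rw [one_mul] at hkey
    rcases hdpm with h | h
    · exact h
    · exfalso
      rw [h] at hkey
      linarith
  · rw [ho.neg_one_pow] at hkey ⊢
    rcases hdpm with h | h
    · exfalso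
      rw [h] at hkey
      linarith
    · exact h

lemma det_int_eq {ℓ r N : ℕ} (hr : r ≤ ℓ) (hN : 0 < N)
    (R : Matrix (Fin ℓ) (Fin ℓ) ℤ) (hRN : R ^ N = 1)
    (hrank : ((R - 1).map (Int.cast : ℤ → ℝ)).rank = r) :
    R.det = (-1 : ℤ) ^ r := by
  have hc : ⇑(Int.castRingHom ℝ) = (Int.cast : ℤ → ℝ) := rfl
  have hmapN : (R.map (Int.cast : ℤ → ℝ)) ^ N = 1 := by
    calc (R.map (Int.cast : ℤ → ℝ)) ^ N
        = (Int.castRingHom ℝ).mapMatrix (R ^ N) := by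
          rw [map_pow, RingHom.mapMatrix_apply, hc]
      _ = 1 := by rw [hRN]; exact _root_.map_one _
  have hsub : (R.map (Int.cast : ℤ → ℝ)) - 1 = (R - 1).map (Int.cast : ℤ → ℝ) := by
    rw [Matrix.map_sub (Int.cast : ℤ → ℝ) (fun a b => by push_cast; ring),
      Matrix.map_one _ (by norm_num) (by norm_num)]
  have hdet := det_real_eq hr hN (R.map (Int.cast : ℤ → ℝ)) hmapN (by rw [hsub]; exact hrank)
  have hcast : ((R.det : ℤ) : ℝ) = (((-1 : ℤ) ^ r : ℤ) : ℝ) := by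
    rw [show ((R.det : ℤ) : ℝ) = (R.map (Int.cast : ℤ → ℝ)).det from by
      rw [← hc, ← RingHom.mapMatrix_apply, RingHom.map_det], hdet]
    push_cast
    ring
  exact_mod_cast hcast

lemma rank_map_real {ℓ r : ℕ} (hr : r ≤ ℓ) (S A T : Matrix (Fin ℓ) (Fin ℓ) ℤ)
    (hS : IsUnit S.det) (hT : IsUnit T.det) (d : Fin ℓ → ℤ)
    (hSNF : S * A * T = Matrix.diagonal d)
    (hpos : ∀ i : Fin ℓ, (i : ℕ) < r → d i ≠ 0)
    (hzero : ∀ i : Fin ℓ, r ≤ (i : ℕ) → d i = 0) :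
    (A.map (Int.cast : ℤ → ℝ)).rank = r := by
  classical
  set c : ℤ →+* ℝ := Int.castRingHom ℝ with hcdef
  have hc : ⇑c = (Int.cast : ℤ → ℝ) := rfl
  have hSu : IsUnit (S.map c).det := by
    rw [← RingHom.mapMatrix_apply, ← RingHom.map_det]; exact hS.map c
  have hTu : IsUnit (T.map c).det := by
    rw [← RingHom.mapMatrix_apply, ← RingHom.map_det]; exact hT.map c
  have hmap : (S.map c) * (A.map c) * (T.map c)
      = Matrix.diagonal (fun i => ((d i : ℤ) : ℝ)) := by
    rw [← Matrix.map_mul, ← Matrix.map_mul, hSNF, Matrix.diagonal_map (map_zero c)]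
    rfl
  have h1 : ((S.map c) * (A.map c) * (T.map c)).rank = (A.map c).rank := by
    rw [Matrix.rank_mul_eq_left_of_isUnit_det (T.map c) _ hTu,
      Matrix.rank_mul_eq_right_of_isUnit_det (S.map c) _ hSu]
  rw [hmap] at h1
  have he : ∀ i : Fin ℓ, (((d i : ℤ) : ℝ) ≠ 0) ↔ (i : ℕ) < r := by
    intro i
    constructor
    · intro h
      by_contra hlt
      exact h (by rw [hzero i (le_of_not_gt hlt)]; simp)
    · intro h
      exact Int.cast_ne_zero.mpr (hpos i h)
  rw [show A.map (Int.cast : ℤ → ℝ) = A.map c from rfl, ← h1, Matrix.rank_diagonal,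
    Fintype.card_congr (Equiv.subtypeEquivRight he)]
  exact card_lt_subtype ℓ r hr

end DetSign

/-- Self-duality: Identifying the representation ring `R(Γ)`
with class functions via characters, the quasi-polynomial extension of
`F(q) = χ_{L/qL}` to all integers satisfies `F(q) = (−1)^ℓ δ_ρ · F(−q)`,
i.e. for every `q > 0` and `γ ∈ Γ`,
`χ_{L/qL}(γ) = (−1)^ℓ · det(R_γ) · (∏_j gcd(e_{γ,j}, q)) · (−q)^{ℓ−r(γ)}`,
the right-hand side being the value at `γ` of `(−1)^ℓ δ_ρ · F(−q)` where
`F(−q)` is the polynomial extension of the character formula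
(`gcd(e, −q) = gcd(e, q)`). The ranks `r γ` and elementary divisors `d γ j`
of `R_γ − I` are encoded by Smith normal forms. -/
theorem stmt15 (ℓ : ℕ) (Γ : Type*) [Group Γ] [Fintype Γ]
    (ρ : Γ →* Matrix.GeneralLinearGroup (Fin ℓ) ℤ) (hρ : Function.Injective ρ)
    (r : Γ → ℕ) (hr : ∀ γ, r γ ≤ ℓ)
    (S T : Γ → Matrix (Fin ℓ) (Fin ℓ) ℤ)
    (hS : ∀ γ, IsUnit (S γ).det) (hT : ∀ γ, IsUnit (T γ).det)
    (d : Γ → Fin ℓ → ℤ)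
    (hSNF : ∀ γ, S γ * ((ρ γ : Matrix (Fin ℓ) (Fin ℓ) ℤ) - 1) * T γ = Matrix.diagonal (d γ))
    (hpos : ∀ γ, ∀ i : Fin ℓ, (i : ℕ) < r γ → 0 < d γ i)
    (hzero : ∀ γ, ∀ i : Fin ℓ, r γ ≤ (i : ℕ) → d γ i = 0)
    (hdvd : ∀ γ, ∀ i j : Fin ℓ, i ≤ j → (j : ℕ) < r γ → d γ i ∣ d γ j)
    (q : ℕ) (hq : 0 < q) :
    (fun γ : Γ => (fixCard (ρ γ : Matrix (Fin ℓ) (Fin ℓ) ℤ) q : ℂ))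
      = fun γ : Γ => (-1 : ℂ) ^ ℓ * ((ρ γ : Matrix (Fin ℓ) (Fin ℓ) ℤ).det : ℂ) *
          ((∏ i : Fin ℓ, if (i : ℕ) < r γ then (Int.gcd (d γ i) (q : ℤ) : ℂ) else 1)
            * (-(q : ℂ)) ^ (ℓ - r γ)) := by
  classical
  funext γ
  set R : Matrix (Fin ℓ) (Fin ℓ) ℤ := (ρ γ : Matrix (Fin ℓ) (Fin ℓ) ℤ) with hRdef
  set N := Fintype.card Γ with hNdef
  have hN : 0 < N := Fintype.card_pos
  have hRN : R ^ N = 1 := by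
    have h1 : (ρ γ) ^ N = 1 := by
      rw [← map_pow, pow_card_eq_one]
      exact _root_.map_one ρ
    calc R ^ N = (((ρ γ) ^ N : Matrix.GeneralLinearGroup (Fin ℓ) ℤ) :
        Matrix (Fin ℓ) (Fin ℓ) ℤ) := (Units.val_pow_eq_pow_val _ _).symm
      _ = 1 := by rw [h1]; rfl
  have hrank : ((R - 1).map (Int.cast : ℤ → ℝ)).rank = r γ :=
    rank_map_real (hr γ) (S γ) (R - 1) (T γ) (hS γ) (hT γ) (d γ) (hSNF γ)
      (fun i hi => (hpos γ i hi).ne') (hzero γ)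
  have hdet : R.det = (-1 : ℤ) ^ (r γ) := det_int_eq (hr γ) hN R hRN hrank
  have hfix : fixCard R q = ∏ i, Int.gcd (d γ i) (q : ℤ) :=
    fixCard_eq_prod q hq R (S γ) (T γ) (hS γ) (hT γ) (d γ) (hSNF γ)
  rw [hfix, hdet]
  push_cast
  set P : ℂ := ∏ i : Fin ℓ, if (i : ℕ) < r γ then (Int.gcd (d γ i) (q : ℤ) : ℂ) else 1 with hP
  have hsplit : (∏ i : Fin ℓ, ((Int.gcd (d γ i) (q : ℤ) : ℕ) : ℂ))
      = P * (q : ℂ) ^ (ℓ - r γ) := by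
    have hptwise : ∀ i : Fin ℓ, ((Int.gcd (d γ i) (q : ℤ) : ℕ) : ℂ) =
        (if (i : ℕ) < r γ then ((Int.gcd (d γ i) (q : ℤ) : ℕ) : ℂ) else 1) *
        (if (i : ℕ) < r γ then 1 else (q : ℂ)) := by
      intro i
      by_cases h : (i : ℕ) < r γ
      · simp [h]
      · simp only [h, if_false, one_mul]
        rw [hzero γ i (le_of_not_gt h)]
        simp [Int.gcd]
    rw [Finset.prod_congr rfl (fun i _ => hptwise i), Finset.prod_mul_distrib, hP]
    congr 1
    rw [Finset.prod_ite, Finset.prod_const_one, Finset.prod_const, one_mul]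
    congr 1
    exact card_filter_not_lt ℓ (r γ) (hr γ)
  rw [hsplit]
  have hsign : (-1 : ℂ) ^ ℓ * (-1 : ℂ) ^ (r γ) * (-1 : ℂ) ^ (ℓ - r γ) = 1 := by
    rw [← pow_add, ← pow_add, show ℓ + r γ + (ℓ - r γ) = 2 * ℓ by have := hr γ; omega,
      pow_mul]
    norm_num
  calc P * (q : ℂ) ^ (ℓ - r γ)
      = ((-1 : ℂ) ^ ℓ * (-1 : ℂ) ^ (r γ) * (-1 : ℂ) ^ (ℓ - r γ)) *
        (P * (q : ℂ) ^ (ℓ - r γ)) := by rw [hsign, one_mul]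
    _ = (-1 : ℂ) ^ ℓ * (-1 : ℂ) ^ (r γ) * (P * ((-1 : ℂ) ^ (ℓ - r γ) * (q : ℂ) ^ (ℓ - r γ))) := by
        ring
    _ = (-1 : ℂ) ^ ℓ * (-1 : ℂ) ^ (r γ) * (P * (-(q : ℂ)) ^ (ℓ - r γ)) := by
        rw [neg_pow (q : ℂ) (ℓ - r γ)]
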